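/- If p is a finitary polynomial functor (all direction-sets finite) and J is a filtered category, then for any diagram q : J → Poly the canonical map colim_j (p ◁ q_j) → p ◁ (colim_j q_j) is an isomorphism of polynomial functors, where ◁ denotes composition. -/

import Mathlib

universe v u

open CategoryTheory Limits

/-- A morphism of polynomial functors: forwards on positions, backwards on directions. -/
structure PolyHom (p q : PFunctor.{u}) : Type u where
  onPos : p.A → q.A
  onDir : ∀ a : p.A, q.B (onPos a) → p.B a

/-- The category `Poly` of polynomial endofunctors on `Set` and natural transformations
between them (presented position/direction-wise). -/
instance : Category PFunctor.{u} where
  Hom := PolyHom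
  id p := ⟨fun a => a, fun _ d => d⟩
  comp φ ψ := ⟨fun a => ψ.onPos (φ.onPos a), fun a d => φ.onDir a (ψ.onDir (φ.onPos a) d)⟩
  id_comp _ := rfl
  comp_id _ := rfl
  assoc _ _ _ := rfl

/-- Post-composition `q ↦ p ◁ q` with a fixed polynomial `p`, as a functor `Poly ⥤ Poly`.
(`PFunctor.comp p q` is the composite functor `p ∘ q`.) -/
def compL (p : PFunctor.{u}) : PFunctor.{u} ⥤ PFunctor.{u} where
  obj q := p.comp q
  map φ :=
    { onPos := fun x => ⟨x.1, fun b => φ.onPos (x.2 b)⟩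
      onDir := fun x d => ⟨d.1, φ.onDir (x.2 d.1) d.2⟩ }
  map_id _ := rfl
  map_comp _ _ := rfl

/-- Pre-composition `p ↦ p ◁ q` with a fixed polynomial `q`, as a functor `Poly ⥤ Poly`. -/
def compR (q : PFunctor.{u}) : PFunctor.{u} ⥤ PFunctor.{u} where
  obj p := p.comp q
  map φ :=
    { onPos := fun x => ⟨φ.onPos x.1, fun b => x.2 (φ.onDir x.1 b)⟩
      onDir := fun x d => ⟨φ.onDir x.1 d.1, d.2⟩ }
  map_id _ := rfl
  map_comp _ _ := rfl

/-- Evaluation of polynomial functors at a set `X`, as a functor `Poly ⥤ Set`. -/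
def evalPoly (X : Type u) : PFunctor.{u} ⥤ Type u where
  obj p := p.Obj X
  map φ := TypeCat.ofHom (fun x => ⟨φ.onPos x.1, fun d => x.2 (φ.onDir x.1 d)⟩)
  map_id _ := rfl
  map_comp _ _ := rfl

/-- A map of polynomial functors is cartesian if all the backwards maps on directions
are bijections (equivalently, all naturality squares are pullbacks). -/
def IsCartesian {p q : PFunctor.{u}} (φ : p ⟶ q) : Prop :=
  ∀ a, Function.Bijective (φ.onDir a)

/-- The wide subcategory `Poly_Cart` of polynomial functors and cartesian maps. -/
def PolyCart : Type (u + 1) := PFunctor.{u}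

instance : Category PolyCart.{u} where
  Hom p q := { φ : (show PFunctor.{u} from p) ⟶ (show PFunctor.{u} from q) // IsCartesian φ }
  id p := ⟨𝟙 _, fun _ => Function.bijective_id⟩
  comp φ ψ := ⟨φ.1 ≫ ψ.1, fun a => (φ.2 a).comp (ψ.2 (φ.1.onPos a))⟩
  id_comp _ := rfl
  comp_id _ := rfl
  assoc _ _ _ := rfl

/-- The inclusion functor `Poly_Cart ⥤ Poly`. -/
def polyCartIncl : PolyCart.{u} ⥤ PFunctor.{u} where
  obj p := p
  map φ := φ.1
  map_id _ := rfl
  map_comp _ _ := rfl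

namespace PolyColim

open CategoryTheory Limits

universe w w₂

theorem polyHom_ext {P Q : PFunctor.{u}} {φ ψ : P ⟶ Q}
    (h1 : ∀ a, φ.onPos a = ψ.onPos a)
    (h2 : ∀ a (d : Q.B (φ.onPos a)) (d' : Q.B (ψ.onPos a)), HEq d d' → φ.onDir a d = ψ.onDir a d') :
    φ = ψ := by
  obtain ⟨f, g⟩ := φ; obtain ⟨f', g'⟩ := ψ
  obtain rfl : f = f' := funext h1
  have : g = g' := by
    funext a d
    exact h2 a d d HEq.rfl
  rw [this]

theorem onDir_eq {P Q : PFunctor.{u}} {φ ψ : P ⟶ Q} (h : φ = ψ) (a : P.A)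
    {d : Q.B (φ.onPos a)} {d' : Q.B (ψ.onPos a)} (hd : HEq d d') :
    φ.onDir a d = ψ.onDir a d' := by
  subst h; exact congrArg _ (eq_of_heq hd)

theorem onDir_congr {P Q : PFunctor.{u}} (φ : P ⟶ Q) {a a' : P.A} (h : a = a')
    {d : Q.B (φ.onPos a)} {d' : Q.B (φ.onPos a')} (hd : HEq d d') :
    HEq (φ.onDir a d) (φ.onDir a' d') := by
  subst h; rw [eq_of_heq hd]

theorem sigma_mk_eq {ι : Type u} {γ : ι → Type w} {b b' : ι} (h : b = b')
    {y : γ b} {y' : γ b'} (hy : HEq y y') : (⟨b, y⟩ : Σ i, γ i) = ⟨b', y'⟩ := by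
  subst h; rw [eq_of_heq hy]

theorem sigma_heq_parts {ι : Type u} {β β' : ι → Type w} (h : ∀ b, β b = β' b)
    {z : Σ b, β b} {z' : Σ b, β' b} (hz : HEq z z') : z.1 = z'.1 ∧ HEq z.2 z'.2 := by
  obtain rfl : β = β' := funext h
  cases eq_of_heq hz; exact ⟨rfl, HEq.rfl⟩

theorem sigma_eq_parts {i : Type u} {g : i -> Type w} {z z' : Sigma g} (h : z = z') :
    z.1 = z'.1 /\ HEq z.2 z'.2 := by
  subst h; exact ⟨rfl, HEq.rfl⟩

theorem heq_sum_inl {α α' : Type w} {β β' : Type w₂} (hα : α = α') (hβ : β = β') (a : α)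
    {z' : α' ⊕ β'} (h : HEq (Sum.inl a : α ⊕ β) z') : ∃ a', z' = Sum.inl a' ∧ HEq a a' := by
  subst hα; subst hβ
  exact ⟨a, (eq_of_heq h).symm, HEq.rfl⟩

theorem heq_sum_inr {α α' : Type w} {β β' : Type w₂} (hα : α = α') (hβ : β = β') (b : β)
    {z' : α' ⊕ β'} (h : HEq (Sum.inr b : α ⊕ β) z') : ∃ b', z' = Sum.inr b' ∧ HEq b b' := by
  subst hα; subst hβ
  exact ⟨b, (eq_of_heq h).symm, HEq.rfl⟩

theorem plift_heq {P P' : Prop} (h : P = P') (x : PLift P) (y : PLift P') : HEq x y := by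
  subst h; exact heq_of_eq (Subsingleton.elim x y)

section Diagram

variable {J : Type v} [Category.{v} J] (q : J ⥤ PFunctor.{u})

theorem map_pos_comp {i j k : J} (u : i ⟶ j) (v : j ⟶ k) (a : (q.obj i).A) :
    (q.map (u ≫ v)).onPos a = (q.map v).onPos ((q.map u).onPos a) := by
  rw [q.map_comp]; rfl

theorem map_pos_id {j : J} (a : (q.obj j).A) : (q.map (𝟙 j)).onPos a = a := by
  rw [q.map_id]; rfl

variable (c : Cocone q)

theorem pos_w {j k : J} (u : j ⟶ k) (a : (q.obj j).A) :
    (c.ι.app k).onPos ((q.map u).onPos a) = (c.ι.app j).onPos a :=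
  congrFun (congrArg PolyHom.onPos (c.w u)) a

theorem dir_w {j k : J} (u : j ⟶ k) (a : (q.obj j).A)
    {d : c.pt.B ((c.ι.app k).onPos ((q.map u).onPos a))} {d' : c.pt.B ((c.ι.app j).onPos a)}
    (hd : HEq d d') :
    (q.map u).onDir a ((c.ι.app k).onDir ((q.map u).onPos a) d) = (c.ι.app j).onDir a d' :=
  onDir_eq (c.w u) a hd

end Diagram

end PolyColim
namespace PolyColim

open CategoryTheory Limits

section Colimit

variable {J : Type v} [Category.{v} J] (q : J ⥤ PFunctor.{u}) (c : Cocone q)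

/-- Build a cocone on positions with empty directions. -/
def posCocone (X : Type u) (t : ∀ j, (q.obj j).A → X)
    (ht : ∀ {j k : J} (u : j ⟶ k) (a : (q.obj j).A), t k ((q.map u).onPos a) = t j a) :
    Cocone q where
  pt := ⟨X, fun _ => PEmpty⟩
  ι := {
    app := fun j => ⟨t j, fun _ d => d.elim⟩
    naturality := fun j k u => by
      apply polyHom_ext
      · intro a; exact ht u a
      · intro a d _ _; exact d.elim }

theorem pos_desc (hc : IsColimit c) (X : Type u) (t : ∀ j, (q.obj j).A → X)
    (ht : ∀ {j k : J} (u : j ⟶ k) (a : (q.obj j).A), t k ((q.map u).onPos a) = t j a) :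
    ∃ T : c.pt.A → X, ∀ j a, T ((c.ι.app j).onPos a) = t j a := by
  refine ⟨(hc.desc (posCocone q X t ht)).onPos, fun j a => ?_⟩
  exact congrFun (congrArg PolyHom.onPos (hc.fac (posCocone q X t ht) j)) a

theorem pos_uniq (hc : IsColimit c) {X : Type u} (T T' : c.pt.A → X)
    (h : ∀ j a, T ((c.ι.app j).onPos a) = T' ((c.ι.app j).onPos a)) : T = T' := by
  have ht : ∀ {j k : J} (u : j ⟶ k) (a : (q.obj j).A),
      T ((c.ι.app k).onPos ((q.map u).onPos a)) = T ((c.ι.app j).onPos a) := by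
    intro j k u a; rw [pos_w]
  let s := posCocone q X (fun j a => T ((c.ι.app j).onPos a)) ht
  have f1 : (⟨T, fun _ d => d.elim⟩ : c.pt ⟶ s.pt) = hc.desc s := by
    apply hc.uniq
    intro j
    apply polyHom_ext
    · intro a; rfl
    · intro a d _ _; exact d.elim
  have f2 : (⟨T', fun _ d => d.elim⟩ : c.pt ⟶ s.pt) = hc.desc s := by
    apply hc.uniq
    intro j
    apply polyHom_ext
    · intro a; exact (h j a).symm
    · intro a d _ _; exact d.elim
  have := f1.trans f2.symm
  exact congrArg PolyHom.onPos this

theorem pos_surj (hc : IsColimit c) (x : c.pt.A) : ∃ j a, (c.ι.app j).onPos a = x := by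
  classical
  have h := pos_uniq q c hc
    (fun x => (⟨∃ j a, (c.ι.app j).onPos a = x⟩ : ULift.{u} Prop))
    (fun _ => ⟨True⟩)
    (fun j a => congrArg ULift.up (eq_true ⟨j, a, rfl⟩))
  have := congrFun h x
  have := congrArg ULift.down this
  exact of_eq_true this

variable [IsFiltered J]

theorem pos_eq (hc : IsColimit c) {j k : J} (a : (q.obj j).A) (b : (q.obj k).A)
    (h : (c.ι.app j).onPos a = (c.ι.app k).onPos b) :
    ∃ (m : J) (u : j ⟶ m) (v : k ⟶ m), (q.map u).onPos a = (q.map v).onPos b := by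
  classical
  have ht : ∀ {k₁ k₂ : J} (w : k₁ ⟶ k₂) (b' : (q.obj k₁).A),
      (⟨∃ (m : J) (u : j ⟶ m) (v : k₂ ⟶ m),
          (q.map u).onPos a = (q.map v).onPos ((q.map w).onPos b')⟩ : ULift.{u} Prop)
        = ⟨∃ (m : J) (u : j ⟶ m) (v : k₁ ⟶ m), (q.map u).onPos a = (q.map v).onPos b'⟩ := by
    intro k₁ k₂ w b'
    refine congrArg ULift.up (propext ⟨?_, ?_⟩)
    · rintro ⟨m, u, v, e⟩
      exact ⟨m, u, w ≫ v, by rw [map_pos_comp]; exact e⟩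
    · rintro ⟨m, u, v, e⟩
      -- complete the span v : k₁ ⟶ m, w : k₁ ⟶ k₂
      set f := IsFiltered.leftToMax m k₂ with hf
      set g := IsFiltered.rightToMax m k₂ with hg
      set h₀ := IsFiltered.coeqHom (v ≫ f) (w ≫ g) with hh
      have key : v ≫ f ≫ h₀ = w ≫ g ≫ h₀ := by
        rw [← Category.assoc, IsFiltered.coeq_condition (v ≫ f) (w ≫ g), Category.assoc]
      refine ⟨_, u ≫ f ≫ h₀, g ≫ h₀, ?_⟩
      calc (q.map (u ≫ f ≫ h₀)).onPos a
          = (q.map (f ≫ h₀)).onPos ((q.map u).onPos a) := map_pos_comp q _ _ _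
        _ = (q.map (f ≫ h₀)).onPos ((q.map v).onPos b') := by rw [e]
        _ = (q.map (v ≫ f ≫ h₀)).onPos b' := (map_pos_comp q _ _ _).symm
        _ = (q.map (w ≫ g ≫ h₀)).onPos b' := by rw [key]
        _ = (q.map (g ≫ h₀)).onPos ((q.map w).onPos b') := map_pos_comp q _ _ _
  obtain ⟨T, hT⟩ := pos_desc q c hc (ULift.{u} Prop)
    (fun k' b' => ⟨∃ (m : J) (u : j ⟶ m) (v : k' ⟶ m), (q.map u).onPos a = (q.map v).onPos b'⟩)
    ht
  have h1 : T ((c.ι.app j).onPos a) = T ((c.ι.app k).onPos b) := congrArg T h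
  rw [hT, hT] at h1
  have h2 := congrArg ULift.down h1
  have htrue : ∃ (m : J) (u : j ⟶ m) (v : j ⟶ m), (q.map u).onPos a = (q.map v).onPos a :=
    ⟨j, 𝟙 j, 𝟙 j, rfl⟩
  rw [eq_true htrue] at h2
  exact of_eq_true h2.symm

theorem coeq_pair (hc : IsColimit c) {j : J} (x y : (q.obj j).A)
    (h : (c.ι.app j).onPos x = (c.ι.app j).onPos y) :
    ∃ (k : J) (w : j ⟶ k), (q.map w).onPos x = (q.map w).onPos y := by
  obtain ⟨m, u, v, e⟩ := pos_eq q c hc x y h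
  set h₀ := IsFiltered.coeqHom u v with hh
  refine ⟨_, u ≫ h₀, ?_⟩
  calc (q.map (u ≫ h₀)).onPos x
      = (q.map h₀).onPos ((q.map u).onPos x) := map_pos_comp q _ _ _
    _ = (q.map h₀).onPos ((q.map v).onPos y) := by rw [e]
    _ = (q.map (v ≫ h₀)).onPos y := (map_pos_comp q _ _ _).symm
    _ = (q.map (u ≫ h₀)).onPos y := by rw [IsFiltered.coeq_condition u v]

theorem sim_coeq (hc : IsColimit c) {ι : Type u} [Finite ι] {j : J} (x y : ι → (q.obj j).A)
    (h : ∀ b, (c.ι.app j).onPos (x b) = (c.ι.app j).onPos (y b)) :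
    ∃ (k : J) (w : j ⟶ k), ∀ b, (q.map w).onPos (x b) = (q.map w).onPos (y b) := by
  classical
  have : Fintype ι := Fintype.ofFinite ι
  suffices H : ∀ s : Finset ι, ∃ (k : J) (w : j ⟶ k),
      ∀ b ∈ s, (q.map w).onPos (x b) = (q.map w).onPos (y b) by
    obtain ⟨k, w, hw⟩ := H Finset.univ
    exact ⟨k, w, fun b => hw b (Finset.mem_univ b)⟩
  intro s
  induction s using Finset.induction with
  | empty => exact ⟨j, 𝟙 j, by simp⟩
  | @insert b s hb ih =>
    obtain ⟨k, w, hw⟩ := ih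
    have hx : (c.ι.app k).onPos ((q.map w).onPos (x b))
        = (c.ι.app k).onPos ((q.map w).onPos (y b)) := by
      rw [pos_w, pos_w, h b]
    obtain ⟨k', w', e⟩ := coeq_pair q c hc _ _ hx
    refine ⟨k', w ≫ w', fun b' hb' => ?_⟩
    rcases Finset.mem_insert.mp hb' with h1 | h1
    · subst h1; rw [map_pos_comp, map_pos_comp, e]
    · rw [map_pos_comp, map_pos_comp, hw b' h1]

theorem sim_lift (hc : IsColimit c) {ι : Type u} [Finite ι] (f : ι → c.pt.A) :
    ∃ (j : J) (g : ι → (q.obj j).A), ∀ b, (c.ι.app j).onPos (g b) = f b := by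
  classical
  have : Fintype ι := Fintype.ofFinite ι
  choose jb ab hab using fun b => pos_surj q c hc (f b)
  obtain ⟨S, hS⟩ := IsFiltered.sup_objs_exists (Finset.image jb Finset.univ)
  have hu : ∀ b, Nonempty (jb b ⟶ S) := fun b =>
    hS (Finset.mem_image_of_mem jb (Finset.mem_univ b))
  refine ⟨S, fun b => (q.map (hu b).some).onPos (ab b), fun b => ?_⟩
  rw [pos_w]; exact hab b

end Colimit

end PolyColim
namespace PolyColim

open CategoryTheory Limits

theorem heq_inr' {α α' : Type w} {β β' : Type w₂} (hα : α = α') (hβ : β = β') {b : β} {b' : β'}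
    (hb : HEq b b') : HEq (Sum.inr b : α ⊕ β) (Sum.inr b' : α' ⊕ β') := by
  subst hα; subst hβ; rw [eq_of_heq hb]

section Dir

variable {J : Type v} [Category.{v} J] (q : J ⥤ PFunctor.{u}) (c : Cocone q)

/-- Surjectivity of the canonical map from directions of the colimit vertex to compatible
families of directions over representatives of `x`. -/
theorem dir_exists (hc : IsColimit c) (x : c.pt.A)
    (fam : ∀ j (a : (q.obj j).A), (c.ι.app j).onPos a = x → (q.obj j).B a)
    (compat : ∀ {j k : J} (u : j ⟶ k) (a : (q.obj j).A) (h : (c.ι.app j).onPos a = x)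
      (h' : (c.ι.app k).onPos ((q.map u).onPos a) = x),
      fam j a h = (q.map u).onDir a (fam k ((q.map u).onPos a) h')) :
    ∃ d : c.pt.B x, ∀ j a (h : (c.ι.app j).onPos a = x)
      (d₀ : c.pt.B ((c.ι.app j).onPos a)), HEq d₀ d → (c.ι.app j).onDir a d₀ = fam j a h := by
  classical
  let r : PFunctor.{u} := ⟨c.pt.A, fun y => c.pt.B y ⊕ PLift (y = x)⟩
  let s : Cocone q := {
    pt := r
    ι := {
      app := fun j =>
        ⟨(c.ι.app j).onPos,
          fun a => Sum.elim ((c.ι.app j).onDir a) (fun hh => fam j a hh.down)⟩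
      naturality := fun j k u => by
        refine Eq.trans (polyHom_ext ?_ ?_) (Category.comp_id _).symm
        · intro a; exact pos_w q c u a
        · intro a d d' hd
          have hy : (c.ι.app k).onPos ((q.map u).onPos a) = (c.ι.app j).onPos a :=
            pos_w q c u a
          have hB : c.pt.B ((c.ι.app k).onPos ((q.map u).onPos a))
              = c.pt.B ((c.ι.app j).onPos a) := congrArg c.pt.B hy
          have hP : PLift ((c.ι.app k).onPos ((q.map u).onPos a) = x)
              = PLift ((c.ι.app j).onPos a = x) := congrArg (fun z => PLift (z = x)) hy
          cases d with
          | inl d₀ =>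
            obtain ⟨d₀', rfl, hdd⟩ := heq_sum_inl hB hP d₀
              (show HEq (Sum.inl d₀ : c.pt.B ((c.ι.app k).onPos ((q.map u).onPos a))
                ⊕ PLift ((c.ι.app k).onPos ((q.map u).onPos a) = x)) d' from hd)
            exact dir_w q c u a hdd
          | inr hh =>
            obtain ⟨hh', rfl, _⟩ := heq_sum_inr hB hP hh
              (show HEq (Sum.inr hh : c.pt.B ((c.ι.app k).onPos ((q.map u).onPos a))
                ⊕ PLift ((c.ι.app k).onPos ((q.map u).onPos a) = x)) d' from hd)
            exact (compat u a hh'.down hh.down).symm } }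
  let ψ := hc.desc s
  have hψpos : ψ.onPos = id := by
    apply pos_uniq q c hc
    intro j a
    exact congrFun (congrArg PolyHom.onPos (hc.fac s j)) a
  have hx : ψ.onPos x = x := congrFun hψpos x
  refine ⟨ψ.onDir x (Sum.inr ⟨hx⟩), ?_⟩
  intro j a h d₀ hd₀
  have hposj : ψ.onPos ((c.ι.app j).onPos a) = (c.ι.app j).onPos a := congrFun hψpos _
  have h₂ : ψ.onPos ((c.ι.app j).onPos a) = x := hposj.trans h
  have hheq : HEq (Sum.inr (⟨h₂⟩ : PLift _) : c.pt.B (ψ.onPos ((c.ι.app j).onPos a))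
      ⊕ PLift (ψ.onPos ((c.ι.app j).onPos a) = x))
      (Sum.inr (⟨h⟩ : PLift _) : c.pt.B ((c.ι.app j).onPos a)
      ⊕ PLift ((c.ι.app j).onPos a = x)) :=
    heq_inr' (congrArg c.pt.B hposj) (congrArg (fun z => PLift (z = x)) hposj)
      (plift_heq (congrArg (fun z => z = x) hposj) ⟨h₂⟩ ⟨h⟩)
  have key : (c.ι.app j ≫ ψ).onDir a (Sum.inr ⟨h₂⟩) = (s.ι.app j).onDir a (Sum.inr ⟨h⟩) :=
    onDir_eq (hc.fac s j) a hheq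
  have hde : HEq (ψ.onDir ((c.ι.app j).onPos a) (Sum.inr ⟨h₂⟩)) (ψ.onDir x (Sum.inr ⟨hx⟩)) := by
    refine onDir_congr ψ h ?_
    exact heq_inr' (congrArg (fun z => c.pt.B (ψ.onPos z)) h)
      (congrArg (fun z => PLift (ψ.onPos z = x)) h)
      (plift_heq (congrArg (fun z => ψ.onPos z = x) h) ⟨h₂⟩ ⟨hx⟩)
  have hd : d₀ = ψ.onDir ((c.ι.app j).onPos a) (Sum.inr ⟨h₂⟩) := eq_of_heq (hd₀.trans hde.symm)
  exact (congrArg ((c.ι.app j).onDir a) hd).trans key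

/-- Injectivity: two directions of the colimit vertex which restrict equally to every
representative coincide. -/
theorem dir_unique (hc : IsColimit c) (x : c.pt.A) (d d' : c.pt.B x)
    (h : ∀ j a (hja : (c.ι.app j).onPos a = x)
      (e e' : c.pt.B ((c.ι.app j).onPos a)), HEq e d → HEq e' d' →
      (c.ι.app j).onDir a e = (c.ι.app j).onDir a e') : d = d' := by
  classical
  let swapFun : c.pt.B x → c.pt.B x := fun z => if z = d then d' else if z = d' then d else z
  let sw : ∀ y : c.pt.A, c.pt.B y → c.pt.B y := fun y e =>
    if hy : y = x then cast (congrArg c.pt.B hy).symm (swapFun (cast (congrArg c.pt.B hy) e))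
    else e
  let τ : c.pt ⟶ c.pt := ⟨id, sw⟩
  have fac : ∀ j, c.ι.app j ≫ τ = c.ι.app j := by
    intro j
    apply polyHom_ext
    · intro a; rfl
    intro a e e' he
    obtain rfl : e = e' := eq_of_heq he
    show (c.ι.app j).onDir a (sw ((c.ι.app j).onPos a) e) = (c.ι.app j).onDir a e
    by_cases hy : (c.ι.app j).onPos a = x
    · have h1 : sw ((c.ι.app j).onPos a) e
          = cast (congrArg c.pt.B hy).symm (swapFun (cast (congrArg c.pt.B hy) e)) :=
        dif_pos hy
      have hez : HEq e (cast (congrArg c.pt.B hy) e) := (cast_heq _ _).symm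
      by_cases h2 : cast (congrArg c.pt.B hy) e = d
      · have h3 : swapFun (cast (congrArg c.pt.B hy) e) = d' := if_pos h2
        rw [h1, h3]
        exact (h j a hy e (cast (congrArg c.pt.B hy).symm d') (h2 ▸ hez) (cast_heq _ _)).symm
      · by_cases h4 : cast (congrArg c.pt.B hy) e = d'
        · have h3 : swapFun (cast (congrArg c.pt.B hy) e) = d := by
            show (if _ = d then d' else if _ = d' then d else _) = d
            rw [if_neg h2, if_pos h4]
          rw [h1, h3]
          exact h j a hy (cast (congrArg c.pt.B hy).symm d) e (cast_heq _ _) (h4 ▸ hez)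
        · have h3 : swapFun (cast (congrArg c.pt.B hy) e)
              = cast (congrArg c.pt.B hy) e := by
            show (if _ = d then d' else if _ = d' then d else _) = _
            rw [if_neg h2, if_neg h4]
          rw [h1, h3]
          exact congrArg _ (eq_of_heq ((cast_heq _ _).trans (cast_heq _ _)))
    · have h1 : sw ((c.ι.app j).onPos a) e = e := dif_neg hy
      rw [h1]
  have hτ : τ = 𝟙 c.pt := by
    have h1 : τ = hc.desc c := hc.uniq c τ fac
    have h2 : 𝟙 c.pt = hc.desc c := hc.uniq c (𝟙 c.pt) (fun j => Category.comp_id _)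
    rw [h1, h2]
  have hτd : τ.onDir x d = d := onDir_eq hτ x HEq.rfl
  have h1 : sw x d = cast (congrArg c.pt.B (rfl : x = x)).symm
      (swapFun (cast (congrArg c.pt.B (rfl : x = x)) d)) := dif_pos rfl
  have h2 : swapFun d = d' := if_pos rfl
  by_cases hdd : d = d'
  · exact hdd
  · have : sw x d = d' := by
      rw [h1]
      show swapFun d = d'
      exact h2
    exact (this.symm.trans hτd).symm

end Dir

end PolyColim
namespace PolyColim

open CategoryTheory Limits

section Stage

variable {J : Type v} [Category.{v} J] (p : PFunctor.{u}) (q : J ⥤ PFunctor.{u})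
variable (s : Cocone (q ⋙ compL p))

theorem epos {j k : J} (w : j ⟶ k) (a : p.A) (g : p.B a → (q.obj j).A) :
    (s.ι.app k).onPos ⟨a, fun b => (q.map w).onPos (g b)⟩ = (s.ι.app j).onPos ⟨a, g⟩ :=
  congrFun (congrArg PolyHom.onPos (s.w w)) ⟨a, g⟩

theorem edir {j k : J} (w : j ⟶ k) (a : p.A) (g : p.B a → (q.obj j).A)
    (g' : p.B a → (q.obj k).A) (hg : ∀ b, (q.map w).onPos (g b) = g' b)
    (e : s.pt.B ((s.ι.app j).onPos ⟨a, g⟩)) (e' : s.pt.B ((s.ι.app k).onPos ⟨a, g'⟩))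
    (he : HEq e' e) :
    ((s.ι.app k).onDir ⟨a, g'⟩ e').1 = ((s.ι.app j).onDir ⟨a, g⟩ e).1
    ∧ ∀ (dd : (q.obj k).B ((q.map w).onPos (g ((s.ι.app j).onDir ⟨a, g⟩ e).1))),
        HEq dd ((s.ι.app k).onDir ⟨a, g'⟩ e').2 →
        ((s.ι.app j).onDir ⟨a, g⟩ e).2
          = (q.map w).onDir (g ((s.ι.app j).onDir ⟨a, g⟩ e).1) dd := by
  obtain rfl : (fun b => (q.map w).onPos (g b)) = g' := funext hg
  have key : (s.ι.app j).onDir ⟨a, g⟩ e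
      = ⟨((s.ι.app k).onDir ⟨a, fun b => (q.map w).onPos (g b)⟩ e').1,
          (q.map w).onDir (g ((s.ι.app k).onDir ⟨a, fun b => (q.map w).onPos (g b)⟩ e').1)
            ((s.ι.app k).onDir ⟨a, fun b => (q.map w).onPos (g b)⟩ e').2⟩ :=
    (onDir_eq (s.w w) ⟨a, g⟩ he).symm
  obtain ⟨h1, h2⟩ := sigma_eq_parts key
  refine ⟨h1.symm, fun dd hdd => ?_⟩
  refine eq_of_heq (h2.trans ?_)
  exact onDir_congr (q.map w) (congrArg g h1.symm) hdd.symm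

theorem lift_refine [IsFiltered J] (c : Cocone q) (hc : IsColimit c) {a : p.A} [Finite (p.B a)]
    (f : p.B a → c.pt.A) {j j' : J} (g : p.B a → (q.obj j).A) (g' : p.B a → (q.obj j').A)
    (hg : ∀ b, (c.ι.app j).onPos (g b) = f b) (hg' : ∀ b, (c.ι.app j').onPos (g' b) = f b) :
    ∃ (k : J) (u : j ⟶ k) (v : j' ⟶ k),
      ∀ b, (q.map u).onPos (g b) = (q.map v).onPos (g' b) := by
  have hp : ∀ b, (c.ι.app (IsFiltered.max j j')).onPos
        ((q.map (IsFiltered.leftToMax j j')).onPos (g b))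
      = (c.ι.app (IsFiltered.max j j')).onPos
        ((q.map (IsFiltered.rightToMax j j')).onPos (g' b)) := by
    intro b; rw [pos_w, pos_w, hg b, hg' b]
  obtain ⟨k, w, hw⟩ := sim_coeq q c hc _ _ hp
  refine ⟨k, IsFiltered.leftToMax j j' ≫ w, IsFiltered.rightToMax j j' ≫ w, fun b => ?_⟩
  rw [map_pos_comp, map_pos_comp, hw b]

/-- The direction data extracted at a stage `k` above the base stage `j₀`. -/
def stageE {a : p.A} {j₀ : J} (g₀ : p.B a → (q.obj j₀).A)
    (e₀ : s.pt.B ((s.ι.app j₀).onPos ⟨a, g₀⟩)) {k : J} (u : j₀ ⟶ k) :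
    Σ b : p.B a, (q.obj k).B ((q.map u).onPos (g₀ b)) :=
  (s.ι.app k).onDir ⟨a, fun b => (q.map u).onPos (g₀ b)⟩
    (cast (congrArg s.pt.B (epos p q s u a g₀).symm) e₀)

theorem stageE_fst {a : p.A} {j₀ : J} (g₀ : p.B a → (q.obj j₀).A)
    (e₀ : s.pt.B ((s.ι.app j₀).onPos ⟨a, g₀⟩)) {k : J} (u : j₀ ⟶ k) :
    (stageE p q s g₀ e₀ u).1 = ((s.ι.app j₀).onDir ⟨a, g₀⟩ e₀).1 :=
  (edir p q s u a g₀ (fun b => (q.map u).onPos (g₀ b)) (fun _ => rfl) e₀ _ (cast_heq _ _)).1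

/-- The direction at stage `k`, reindexed at the canonical position `b₀`. -/
def stageD {a : p.A} {j₀ : J} (g₀ : p.B a → (q.obj j₀).A)
    (e₀ : s.pt.B ((s.ι.app j₀).onPos ⟨a, g₀⟩)) {k : J} (u : j₀ ⟶ k) :
    (q.obj k).B ((q.map u).onPos (g₀ ((s.ι.app j₀).onDir ⟨a, g₀⟩ e₀).1)) :=
  cast (congrArg (fun b => (q.obj k).B ((q.map u).onPos (g₀ b))) (stageE_fst p q s g₀ e₀ u))
    (stageE p q s g₀ e₀ u).2

theorem stageD_heq {a : p.A} {j₀ : J} (g₀ : p.B a → (q.obj j₀).A)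
    (e₀ : s.pt.B ((s.ι.app j₀).onPos ⟨a, g₀⟩)) {k : J} (u : j₀ ⟶ k) :
    HEq (stageD p q s g₀ e₀ u) (stageE p q s g₀ e₀ u).2 := cast_heq _ _

/-- The value of the compatible family at a representative `(j₁, a₁)`, computed via a
common refinement triple `(k, u, v)`. -/
def Vval {a : p.A} {j₀ : J} (g₀ : p.B a → (q.obj j₀).A)
    (e₀ : s.pt.B ((s.ι.app j₀).onPos ⟨a, g₀⟩)) {j₁ : J} (a₁ : (q.obj j₁).A) {k : J}
    (u : j₀ ⟶ k) (v : j₁ ⟶ k)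
    (hv : (q.map u).onPos (g₀ ((s.ι.app j₀).onDir ⟨a, g₀⟩ e₀).1) = (q.map v).onPos a₁) :
    (q.obj j₁).B a₁ :=
  (q.map v).onDir a₁ (cast (congrArg (q.obj k).B hv) (stageD p q s g₀ e₀ u))

theorem Vval_mor {a : p.A} {j₀ : J} (g₀ : p.B a → (q.obj j₀).A)
    (e₀ : s.pt.B ((s.ι.app j₀).onPos ⟨a, g₀⟩)) {j₁ : J} (a₁ : (q.obj j₁).A) {k : J}
    {u u' : j₀ ⟶ k} {v v' : j₁ ⟶ k} (hu : u = u') (hw : v = v')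
    (hv : (q.map u).onPos (g₀ ((s.ι.app j₀).onDir ⟨a, g₀⟩ e₀).1) = (q.map v).onPos a₁)
    (hv' : (q.map u').onPos (g₀ ((s.ι.app j₀).onDir ⟨a, g₀⟩ e₀).1) = (q.map v').onPos a₁) :
    Vval p q s g₀ e₀ a₁ u v hv = Vval p q s g₀ e₀ a₁ u' v' hv' := by
  subst hu; subst hw; rfl

theorem Vval_inv {a : p.A} {j₀ : J} (g₀ : p.B a → (q.obj j₀).A)
    (e₀ : s.pt.B ((s.ι.app j₀).onPos ⟨a, g₀⟩)) {j₁ : J} (a₁ : (q.obj j₁).A) {k k' : J}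
    (u : j₀ ⟶ k) (v : j₁ ⟶ k) (w : k ⟶ k')
    (hv : (q.map u).onPos (g₀ ((s.ι.app j₀).onDir ⟨a, g₀⟩ e₀).1) = (q.map v).onPos a₁)
    (hv' : (q.map (u ≫ w)).onPos (g₀ ((s.ι.app j₀).onDir ⟨a, g₀⟩ e₀).1)
      = (q.map (v ≫ w)).onPos a₁) :
    Vval p q s g₀ e₀ a₁ u v hv = Vval p q s g₀ e₀ a₁ (u ≫ w) (v ≫ w) hv' := by
  have hD := stageD_heq p q s g₀ e₀ u
  have hD' := stageD_heq p q s g₀ e₀ (u ≫ w)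
  have hgk : ∀ b, (q.map w).onPos ((q.map u).onPos (g₀ b)) = (q.map (u ≫ w)).onPos (g₀ b) :=
    fun b => (map_pos_comp q u w (g₀ b)).symm
  have he : HEq (cast (congrArg s.pt.B (epos p q s (u ≫ w) a g₀).symm) e₀)
      (cast (congrArg s.pt.B (epos p q s u a g₀).symm) e₀) :=
    (cast_heq _ _).trans (cast_heq _ _).symm
  obtain ⟨h1, h2⟩ := edir p q s w a (fun b => (q.map u).onPos (g₀ b))
    (fun b => (q.map (u ≫ w)).onPos (g₀ b)) hgk
    (cast (congrArg s.pt.B (epos p q s u a g₀).symm) e₀)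
    (cast (congrArg s.pt.B (epos p q s (u ≫ w) a g₀).symm) e₀) he
  -- h2 describes (stageE u).2 in terms of (stageE (u ≫ w)).2
  have hpos9 : (q.map w).onPos ((q.map u).onPos (g₀ (stageE p q s g₀ e₀ u).1))
      = (q.map (u ≫ w)).onPos (g₀ ((s.ι.app j₀).onDir ⟨a, g₀⟩ e₀).1) := by
    rw [stageE_fst p q s g₀ e₀ u, map_pos_comp]
  have hdd : HEq (cast (congrArg (q.obj k').B hpos9.symm) (stageD p q s g₀ e₀ (u ≫ w)))
      (stageE p q s g₀ e₀ (u ≫ w)).2 := (cast_heq _ _).trans hD'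
  have h3 := h2 (cast (congrArg (q.obj k').B hpos9.symm) (stageD p q s g₀ e₀ (u ≫ w))) hdd
  -- right-hand side: decompose q.map (v ≫ w)
  have hpos10 : (q.map (u ≫ w)).onPos (g₀ ((s.ι.app j₀).onDir ⟨a, g₀⟩ e₀).1)
      = (q.map w).onPos ((q.map v).onPos a₁) := by
    rw [map_pos_comp, hv]
  have hRHS : (q.map (v ≫ w)).onDir a₁
        (cast (congrArg (q.obj k').B hv') (stageD p q s g₀ e₀ (u ≫ w)))
      = (q.map v).onDir a₁ ((q.map w).onDir ((q.map v).onPos a₁)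
        (cast (congrArg (q.obj k').B hpos10) (stageD p q s g₀ e₀ (u ≫ w)))) :=
    onDir_eq (q.map_comp v w) a₁ ((cast_heq _ _).trans (cast_heq _ _).symm)
  show (q.map v).onDir a₁ (cast (congrArg (q.obj k).B hv) (stageD p q s g₀ e₀ u)) = _
  rw [show Vval p q s g₀ e₀ a₁ (u ≫ w) (v ≫ w) hv' = _ from hRHS]
  refine congrArg ((q.map v).onDir a₁) (eq_of_heq ?_)
  -- cast hv (stageD u) ≡ stageD u ≡ (stageE u).2 = (q.map w).onDir ... ≡ RHS inner
  refine ((cast_heq _ _).trans (hD.trans (heq_of_eq h3))).trans ?_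
  -- (q.map w).onDir ((q.map u).onPos (g₀ (stageE u).1)) dd ≡ (q.map w).onDir (v·a₁) Z'
  refine onDir_congr (q.map w) ?_ ?_
  · show (q.map u).onPos (g₀ (stageE p q s g₀ e₀ u).1) = (q.map v).onPos a₁
    rw [stageE_fst p q s g₀ e₀ u, hv]
  · exact (cast_heq _ _).trans ((cast_heq _ _).symm)

theorem Vval_push {a : p.A} {j₀ : J} (g₀ : p.B a → (q.obj j₀).A)
    (e₀ : s.pt.B ((s.ι.app j₀).onPos ⟨a, g₀⟩)) {j₁ j₂ : J} (a₁ : (q.obj j₁).A)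
    (w : j₁ ⟶ j₂) {k : J} (u : j₀ ⟶ k) (v : j₂ ⟶ k)
    (hv : (q.map u).onPos (g₀ ((s.ι.app j₀).onDir ⟨a, g₀⟩ e₀).1)
      = (q.map v).onPos ((q.map w).onPos a₁))
    (hv' : (q.map u).onPos (g₀ ((s.ι.app j₀).onDir ⟨a, g₀⟩ e₀).1)
      = (q.map (w ≫ v)).onPos a₁) :
    Vval p q s g₀ e₀ a₁ u (w ≫ v) hv'
      = (q.map w).onDir a₁ (Vval p q s g₀ e₀ ((q.map w).onPos a₁) u v hv) :=
  onDir_eq (q.map_comp w v) a₁ ((cast_heq _ _).trans (cast_heq _ _).symm)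

theorem Vval_conn {a : p.A} {j₀ : J} [IsFiltered J] (g₀ : p.B a → (q.obj j₀).A)
    (e₀ : s.pt.B ((s.ι.app j₀).onPos ⟨a, g₀⟩)) {j₁ : J} (a₁ : (q.obj j₁).A) {k₁ k₂ : J}
    (u₁ : j₀ ⟶ k₁) (v₁ : j₁ ⟶ k₁) (u₂ : j₀ ⟶ k₂) (v₂ : j₁ ⟶ k₂)
    (hv₁ : (q.map u₁).onPos (g₀ ((s.ι.app j₀).onDir ⟨a, g₀⟩ e₀).1) = (q.map v₁).onPos a₁)
    (hv₂ : (q.map u₂).onPos (g₀ ((s.ι.app j₀).onDir ⟨a, g₀⟩ e₀).1) = (q.map v₂).onPos a₁) :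
    Vval p q s g₀ e₀ a₁ u₁ v₁ hv₁ = Vval p q s g₀ e₀ a₁ u₂ v₂ hv₂ := by
  have hvc : ∀ {k k' : J} (u : j₀ ⟶ k) (v : j₁ ⟶ k)
      (hv : (q.map u).onPos (g₀ ((s.ι.app j₀).onDir ⟨a, g₀⟩ e₀).1) = (q.map v).onPos a₁)
      (w : k ⟶ k'),
      (q.map (u ≫ w)).onPos (g₀ ((s.ι.app j₀).onDir ⟨a, g₀⟩ e₀).1)
        = (q.map (v ≫ w)).onPos a₁ := by
    intro k k' u v hv w
    rw [map_pos_comp, map_pos_comp, hv]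
  set w₁ : k₁ ⟶ IsFiltered.coeq (u₁ ≫ IsFiltered.leftToMax k₁ k₂)
      (u₂ ≫ IsFiltered.rightToMax k₁ k₂) :=
    IsFiltered.leftToMax k₁ k₂ ≫ IsFiltered.coeqHom _ _ with hw₁
  set w₂ : k₂ ⟶ IsFiltered.coeq (u₁ ≫ IsFiltered.leftToMax k₁ k₂)
      (u₂ ≫ IsFiltered.rightToMax k₁ k₂) :=
    IsFiltered.rightToMax k₁ k₂ ≫ IsFiltered.coeqHom _ _ with hw₂
  have e1 : u₁ ≫ w₁ = u₂ ≫ w₂ := by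
    rw [hw₁, hw₂, ← Category.assoc, ← Category.assoc]
    exact IsFiltered.coeq_condition _ _
  have step1 := Vval_inv p q s g₀ e₀ a₁ u₁ v₁ w₁ hv₁ (hvc u₁ v₁ hv₁ w₁)
  have step2 := Vval_inv p q s g₀ e₀ a₁ u₂ v₂ w₂ hv₂ (hvc u₂ v₂ hv₂ w₂)
  have step2' : Vval p q s g₀ e₀ a₁ (u₂ ≫ w₂) (v₂ ≫ w₂) (hvc u₂ v₂ hv₂ w₂)
      = Vval p q s g₀ e₀ a₁ (u₁ ≫ w₁) (v₂ ≫ w₂) (e1 ▸ hvc u₂ v₂ hv₂ w₂) :=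
    Vval_mor p q s g₀ e₀ a₁ e1.symm rfl _ _
  -- now coequalize the two v-components
  set h₂ := IsFiltered.coeqHom (v₁ ≫ w₁) (v₂ ≫ w₂) with hh₂
  have e2 : (v₁ ≫ w₁) ≫ h₂ = (v₂ ≫ w₂) ≫ h₂ := IsFiltered.coeq_condition _ _
  have step3 := Vval_inv p q s g₀ e₀ a₁ (u₁ ≫ w₁) (v₁ ≫ w₁) h₂ (hvc u₁ v₁ hv₁ w₁)
    (hvc (u₁ ≫ w₁) (v₁ ≫ w₁) (hvc u₁ v₁ hv₁ w₁) h₂)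
  have step4 := Vval_inv p q s g₀ e₀ a₁ (u₁ ≫ w₁) (v₂ ≫ w₂) h₂ (e1 ▸ hvc u₂ v₂ hv₂ w₂)
    (hvc (u₁ ≫ w₁) (v₂ ≫ w₂) (e1 ▸ hvc u₂ v₂ hv₂ w₂) h₂)
  have mid : Vval p q s g₀ e₀ a₁ ((u₁ ≫ w₁) ≫ h₂) ((v₁ ≫ w₁) ≫ h₂)
        (hvc (u₁ ≫ w₁) (v₁ ≫ w₁) (hvc u₁ v₁ hv₁ w₁) h₂)
      = Vval p q s g₀ e₀ a₁ ((u₁ ≫ w₁) ≫ h₂) ((v₂ ≫ w₂) ≫ h₂)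
        (hvc (u₁ ≫ w₁) (v₂ ≫ w₂) (e1 ▸ hvc u₂ v₂ hv₂ w₂) h₂) :=
    Vval_mor p q s g₀ e₀ a₁ rfl e2 _ _
  rw [step1, step3, mid, ← step4, ← step2', ← step2]

end Stage

end PolyColim
namespace PolyColim

open CategoryTheory Limits

section Key

variable {J : Type v} [Category.{v} J]

/-- The characterizing property of the direction `d` of the colimit vertex associated to
direction data `e₀` at a base lift `(j₀, g₀)` of the position `(a, f)`. -/
def Char (p : PFunctor.{u}) (q : J ⥤ PFunctor.{u}) (c : Cocone q) (s : Cocone (q ⋙ compL p))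
    {a : p.A} (f : p.B a → c.pt.A) {j₀ : J}
    (g₀ : p.B a → (q.obj j₀).A) (e₀ : s.pt.B ((s.ι.app j₀).onPos ⟨a, g₀⟩))
    (d : c.pt.B (f ((s.ι.app j₀).onDir ⟨a, g₀⟩ e₀).1)) : Prop :=
  ∀ {j₁ : J} (g₁ : p.B a → (q.obj j₁).A), (∀ b, (c.ι.app j₁).onPos (g₁ b) = f b) →
    ∀ (e₁ : s.pt.B ((s.ι.app j₁).onPos ⟨a, g₁⟩)), HEq e₁ e₀ →
    ∀ (dd : c.pt.B ((c.ι.app j₁).onPos (g₁ ((s.ι.app j₀).onDir ⟨a, g₀⟩ e₀).1))), HEq dd d →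
    (s.ι.app j₁).onDir ⟨a, g₁⟩ e₁
      = ⟨((s.ι.app j₀).onDir ⟨a, g₀⟩ e₀).1,
         (c.ι.app j₁).onDir (g₁ ((s.ι.app j₀).onDir ⟨a, g₀⟩ e₀).1) dd⟩

variable [IsFiltered J]

theorem key (p : PFunctor.{u}) (q : J ⥤ PFunctor.{u}) (c : Cocone q) (hc : IsColimit c)
    (s : Cocone (q ⋙ compL p)) {a : p.A} [Finite (p.B a)] (f : p.B a → c.pt.A) {j₀ : J}
    (g₀ : p.B a → (q.obj j₀).A) (hg₀ : ∀ b, (c.ι.app j₀).onPos (g₀ b) = f b)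
    (e₀ : s.pt.B ((s.ι.app j₀).onPos ⟨a, g₀⟩)) :
    ∃ d : c.pt.B (f ((s.ι.app j₀).onDir ⟨a, g₀⟩ e₀).1),
      Char p q c s f g₀ e₀ d ∧
      ∀ d' : c.pt.B (f ((s.ι.app j₀).onDir ⟨a, g₀⟩ e₀).1),
        Char p q c s f g₀ e₀ d' → d' = d := by
  classical
  -- notation
  have tri : ∀ {j₁ : J} (a₁ : (q.obj j₁).A),
      (c.ι.app j₁).onPos a₁ = f ((s.ι.app j₀).onDir ⟨a, g₀⟩ e₀).1 →
      ∃ (k : J) (u : j₀ ⟶ k) (v : j₁ ⟶ k),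
        (q.map u).onPos (g₀ ((s.ι.app j₀).onDir ⟨a, g₀⟩ e₀).1) = (q.map v).onPos a₁ := by
    intro j₁ a₁ h
    exact pos_eq q c hc _ a₁ ((hg₀ _).trans h.symm)
  let fam : ∀ j₁ (a₁ : (q.obj j₁).A),
      (c.ι.app j₁).onPos a₁ = f ((s.ι.app j₀).onDir ⟨a, g₀⟩ e₀).1 → (q.obj j₁).B a₁ :=
    fun j₁ a₁ h =>
      Vval p q s g₀ e₀ a₁ (tri a₁ h).choose_spec.choose
        (tri a₁ h).choose_spec.choose_spec.choose
        (tri a₁ h).choose_spec.choose_spec.choose_spec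
  have fam_eq : ∀ {j₁} (a₁ : (q.obj j₁).A)
      (h : (c.ι.app j₁).onPos a₁ = f ((s.ι.app j₀).onDir ⟨a, g₀⟩ e₀).1)
      {k} (u : j₀ ⟶ k) (v : j₁ ⟶ k)
      (hv : (q.map u).onPos (g₀ ((s.ι.app j₀).onDir ⟨a, g₀⟩ e₀).1) = (q.map v).onPos a₁),
      fam j₁ a₁ h = Vval p q s g₀ e₀ a₁ u v hv := by
    intro j₁ a₁ h k u v hv
    exact Vval_conn p q s g₀ e₀ a₁ _ _ u v _ hv
  have compat : ∀ {j₁ k₁ : J} (w : j₁ ⟶ k₁) (a₁ : (q.obj j₁).A)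
      (h : (c.ι.app j₁).onPos a₁ = f ((s.ι.app j₀).onDir ⟨a, g₀⟩ e₀).1)
      (h' : (c.ι.app k₁).onPos ((q.map w).onPos a₁)
        = f ((s.ι.app j₀).onDir ⟨a, g₀⟩ e₀).1),
      fam j₁ a₁ h = (q.map w).onDir a₁ (fam k₁ ((q.map w).onPos a₁) h') := by
    intro j₁ k₁ w a₁ h h'
    obtain ⟨k, u, v, hv⟩ := tri ((q.map w).onPos a₁) h'
    have hv' : (q.map u).onPos (g₀ ((s.ι.app j₀).onDir ⟨a, g₀⟩ e₀).1)
        = (q.map (w ≫ v)).onPos a₁ := by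
      rw [map_pos_comp]; exact hv
    rw [fam_eq ((q.map w).onPos a₁) h' u v hv, fam_eq a₁ h u (w ≫ v) hv']
    exact Vval_push p q s g₀ e₀ a₁ w u v hv hv'
  obtain ⟨d, hd⟩ := dir_exists q c hc (f ((s.ι.app j₀).onDir ⟨a, g₀⟩ e₀).1) fam
    (fun w a₁ h h' => compat w a₁ h h')
  -- any direction whose restrictions are given by `fam` satisfies `Char`
  have charAux : ∀ (d' : c.pt.B (f ((s.ι.app j₀).onDir ⟨a, g₀⟩ e₀).1)),
      (∀ {j₁} (a₁ : (q.obj j₁).A)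
        (h : (c.ι.app j₁).onPos a₁ = f ((s.ι.app j₀).onDir ⟨a, g₀⟩ e₀).1)
        (d₀ : c.pt.B ((c.ι.app j₁).onPos a₁)), HEq d₀ d' →
        (c.ι.app j₁).onDir a₁ d₀ = fam j₁ a₁ h) →
      Char p q c s f g₀ e₀ d' := by
    intro d' hΦ j₁ g₁ hg₁ e₁ he₁ dd hdd
    obtain ⟨k, u, w, hr⟩ := lift_refine p q c hc f g₀ g₁ hg₀ hg₁
    have hgr : ∀ b, (q.map w).onPos (g₁ b) = (q.map u).onPos (g₀ b) := fun b => (hr b).symm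
    have hek : HEq (cast (congrArg s.pt.B (epos p q s u a g₀).symm) e₀) e₁ :=
      (cast_heq _ _).trans he₁.symm
    obtain ⟨h1, h2⟩ := edir p q s w a g₁ (fun b => (q.map u).onPos (g₀ b)) hgr e₁
      (cast (congrArg s.pt.B (epos p q s u a g₀).symm) e₀) hek
    have hE1 : ((s.ι.app j₁).onDir ⟨a, g₁⟩ e₁).1 = ((s.ι.app j₀).onDir ⟨a, g₀⟩ e₀).1 := by
      rw [← h1]; exact stageE_fst p q s g₀ e₀ u
    have hv : (q.map u).onPos (g₀ ((s.ι.app j₀).onDir ⟨a, g₀⟩ e₀).1)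
        = (q.map w).onPos (g₁ ((s.ι.app j₀).onDir ⟨a, g₀⟩ e₀).1) := hr _
    have hfam : (c.ι.app j₁).onDir (g₁ ((s.ι.app j₀).onDir ⟨a, g₀⟩ e₀).1) dd
        = fam j₁ (g₁ ((s.ι.app j₀).onDir ⟨a, g₀⟩ e₀).1) (hg₁ _) := hΦ _ (hg₁ _) dd hdd
    have hVal := fam_eq (g₁ ((s.ι.app j₀).onDir ⟨a, g₀⟩ e₀).1) (hg₁ _) u w hv
    have hty : (q.map u).onPos (g₀ ((s.ι.app j₀).onDir ⟨a, g₀⟩ e₀).1)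
        = (q.map w).onPos (g₁ ((s.ι.app j₁).onDir ⟨a, g₁⟩ e₁).1) := by
      rw [hE1]; exact hr _
    have hdd₂ : HEq (cast (congrArg (q.obj k).B hty) (stageD p q s g₀ e₀ u))
        ((s.ι.app k).onDir ⟨a, fun b => (q.map u).onPos (g₀ b)⟩
          (cast (congrArg s.pt.B (epos p q s u a g₀).symm) e₀)).2 :=
      (cast_heq _ _).trans (stageD_heq p q s g₀ e₀ u)
    have h3 := h2 (cast (congrArg (q.obj k).B hty) (stageD p q s g₀ e₀ u)) hdd₂
    have hsnd : HEq ((s.ι.app j₁).onDir ⟨a, g₁⟩ e₁).2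
        ((c.ι.app j₁).onDir (g₁ ((s.ι.app j₀).onDir ⟨a, g₀⟩ e₀).1) dd) := by
      rw [hfam, hVal]
      refine (heq_of_eq h3).trans ?_
      refine HEq.trans (b := (q.map w).onDir (g₁ ((s.ι.app j₀).onDir ⟨a, g₀⟩ e₀).1)
        (cast (congrArg (q.obj k).B hv) (stageD p q s g₀ e₀ u))) ?_ HEq.rfl
      exact onDir_congr (q.map w) (congrArg g₁ hE1) ((cast_heq _ _).trans (cast_heq _ _).symm)
    exact sigma_mk_eq hE1 hsnd
  have charConv : ∀ (d' : c.pt.B (f ((s.ι.app j₀).onDir ⟨a, g₀⟩ e₀).1)),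
      Char p q c s f g₀ e₀ d' →
      ∀ {j₁} (a₁ : (q.obj j₁).A)
        (h : (c.ι.app j₁).onPos a₁ = f ((s.ι.app j₀).onDir ⟨a, g₀⟩ e₀).1)
        (d₀ : c.pt.B ((c.ι.app j₁).onPos a₁)), HEq d₀ d' →
        (c.ι.app j₁).onDir a₁ d₀ = fam j₁ a₁ h := by
    intro d' hchar j₁ a₁ h d₀ hd₀
    obtain ⟨k, u, v, hv⟩ := tri a₁ h
    have hgk : ∀ b, (c.ι.app k).onPos ((q.map u).onPos (g₀ b)) = f b :=
      fun b => (pos_w q c u (g₀ b)).trans (hg₀ b)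
    have hch := hchar (fun b => (q.map u).onPos (g₀ b)) hgk
      (cast (congrArg s.pt.B (epos p q s u a g₀).symm) e₀) (cast_heq _ _)
      (cast (congrArg c.pt.B (hgk ((s.ι.app j₀).onDir ⟨a, g₀⟩ e₀).1).symm) d') (cast_heq _ _)
    obtain ⟨hf, hs⟩ := sigma_eq_parts hch
    rw [fam_eq a₁ h u v hv]
    have hstep := dir_w q c v a₁
      (d := cast (congrArg c.pt.B ((pos_w q c v a₁).trans h).symm) d') (d' := d₀)
      ((cast_heq _ _).trans hd₀.symm)
    rw [← hstep]
    refine congrArg ((q.map v).onDir a₁) (eq_of_heq ?_)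
    refine HEq.trans (b := (c.ι.app k).onDir
        ((q.map u).onPos (g₀ ((s.ι.app j₀).onDir ⟨a, g₀⟩ e₀).1))
        (cast (congrArg c.pt.B (hgk ((s.ι.app j₀).onDir ⟨a, g₀⟩ e₀).1).symm) d')) ?_ ?_
    · exact onDir_congr (c.ι.app k) hv.symm ((cast_heq _ _).trans (cast_heq _ _).symm)
    · exact hs.symm.trans ((stageD_heq p q s g₀ e₀ u).symm.trans (cast_heq _ _).symm)
  refine ⟨d, charAux d (fun a₁ h d₀ hd₀ => hd _ a₁ h d₀ hd₀), ?_⟩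
  intro d' hchar
  refine dir_unique q c hc _ d' d ?_
  intro j₁ a₁ hja e e' he he'
  exact (charConv d' hchar a₁ hja e he).trans (hd _ a₁ hja e' he').symm

end Key

end PolyColim
namespace PolyColim

open CategoryTheory Limits

theorem pos_coherent {J : Type v} [Category.{v} J] [IsFiltered J] (p : PFunctor.{u})
    (q : J ⥤ PFunctor.{u}) (c : Cocone q) (hc : IsColimit c) (s : Cocone (q ⋙ compL p))
    {a : p.A} [Finite (p.B a)] (f : p.B a → c.pt.A) {j j' : J}
    (g : p.B a → (q.obj j).A) (g' : p.B a → (q.obj j').A)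
    (hg : ∀ b, (c.ι.app j).onPos (g b) = f b) (hg' : ∀ b, (c.ι.app j').onPos (g' b) = f b) :
    (s.ι.app j).onPos ⟨a, g⟩ = (s.ι.app j').onPos ⟨a, g'⟩ := by
  obtain ⟨k, u, v, hr⟩ := lift_refine p q c hc f g g' hg hg'
  calc (s.ι.app j).onPos ⟨a, g⟩
      = (s.ι.app k).onPos ⟨a, fun b => (q.map u).onPos (g b)⟩ := (epos p q s u a g).symm
    _ = (s.ι.app k).onPos ⟨a, fun b => (q.map v).onPos (g' b)⟩ :=
        congrArg (fun g0 => (s.ι.app k).onPos ⟨a, g0⟩) (funext hr)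
    _ = (s.ι.app j').onPos ⟨a, g'⟩ := epos p q s v a g'

end PolyColim

open PolyColim

/-- If `p` is a finitary polynomial functor (all direction-sets finite)
and `J` is a filtered category, then for any diagram `q : J ⥤ Poly` the canonical map
`colim_j (p ◁ q_j) → p ◁ (colim_j q_j)` is an isomorphism; equivalently, `p ◁ -`
preserves filtered colimits: the image under `p ◁ -` of any colimit cocone on `q`
is again a colimit cocone. -/
theorem compL_preserves_filtered_colimits {J : Type v} [Category.{v} J] [IsFiltered J]
    (p : PFunctor.{u}) (hp : ∀ a : p.A, Finite (p.B a))
    (q : J ⥤ PFunctor.{u}) (c : Cocone q) (hc : IsColimit c) :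
    Nonempty (IsColimit ((compL p).mapCocone c)) := by
  classical
  obtain ⟨jf, gf, hgf⟩ : ∃ (jf : ∀ (a : p.A), (p.B a → c.pt.A) → J)
      (gf : ∀ (a : p.A) (f : p.B a → c.pt.A), p.B a → (q.obj (jf a f)).A),
      ∀ a f b, (c.ι.app (jf a f)).onPos (gf a f b) = f b := by
    choose jf gf h using fun (a : p.A) (f : p.B a → c.pt.A) => by
      haveI := hp a; exact sim_lift q c hc f
    exact ⟨jf, gf, h⟩
  refine ⟨{
    desc := fun s =>
      ⟨fun x => (s.ι.app (jf x.1 x.2)).onPos ⟨x.1, gf x.1 x.2⟩,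
       fun x e =>
        ⟨((s.ι.app (jf x.1 x.2)).onDir ⟨x.1, gf x.1 x.2⟩ e).1,
         (@key J _ _ p q c hc s x.1 (hp x.1) x.2 (jf x.1 x.2) (gf x.1 x.2)
            (hgf x.1 x.2) e).choose⟩⟩
    fac := ?_
    uniq := ?_ }⟩
  · intro s j
    apply polyHom_ext
    · intro y
      haveI := hp y.1
      exact pos_coherent p q c hc s (fun b => (c.ι.app j).onPos (y.2 b))
        (gf y.1 _) y.2 (hgf y.1 _) (fun _ => rfl)
    · intro y D D' hD
      haveI := hp y.1
      have K := @key J _ _ p q c hc s y.1 (hp y.1) (fun b => (c.ι.app j).onPos (y.2 b))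
        (jf y.1 (fun b => (c.ι.app j).onPos (y.2 b)))
        (gf y.1 (fun b => (c.ι.app j).onPos (y.2 b)))
        (hgf y.1 (fun b => (c.ι.app j).onPos (y.2 b))) D
      exact (K.choose_spec.1 y.2 (fun _ => rfl) D' hD.symm K.choose HEq.rfl).symm
  · intro s m hm
    apply polyHom_ext
    · intro x
      exact (congrArg m.onPos (congrArg (Sigma.mk x.1) (funext (hgf x.1 x.2))).symm).trans
        (congrFun (congrArg PolyHom.onPos (hm (jf x.1 x.2))) ⟨x.1, gf x.1 x.2⟩)
    · intro x e e' he
      obtain ⟨a, f⟩ := x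
      haveI := hp a
      have K := @key J _ _ p q c hc s a (hp a) f (jf a f) (gf a f) (hgf a f) e'
      show m.onDir ⟨a, f⟩ e = ⟨((s.ι.app (jf a f)).onDir ⟨a, gf a f⟩ e').1, K.choose⟩
      have main : ∀ {j₁ : J} (g₁ : p.B a → (q.obj j₁).A)
          (e₁ : s.pt.B ((s.ι.app j₁).onPos ⟨a, g₁⟩))
          (eh : s.pt.B (m.onPos ⟨a, fun b => (c.ι.app j₁).onPos (g₁ b)⟩)), HEq eh e₁ →
          (s.ι.app j₁).onDir ⟨a, g₁⟩ e₁
            = ⟨(m.onDir ⟨a, fun b => (c.ι.app j₁).onPos (g₁ b)⟩ eh).1,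
               (c.ι.app j₁).onDir (g₁ (m.onDir ⟨a, fun b => (c.ι.app j₁).onPos (g₁ b)⟩ eh).1)
                 (m.onDir ⟨a, fun b => (c.ι.app j₁).onPos (g₁ b)⟩ eh).2⟩ := by
        intro j₁ g₁ e₁ eh heh
        exact (onDir_eq (hm j₁) ⟨a, g₁⟩ heh).symm
      have mrel : ∀ {j₁ : J} (g₁ : p.B a → (q.obj j₁).A)
          (hg₁ : ∀ b, (c.ι.app j₁).onPos (g₁ b) = f b)
          (eh : s.pt.B (m.onPos ⟨a, fun b => (c.ι.app j₁).onPos (g₁ b)⟩)), HEq eh e →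
          (m.onDir ⟨a, fun b => (c.ι.app j₁).onPos (g₁ b)⟩ eh).1 = (m.onDir ⟨a, f⟩ e).1
          ∧ HEq (m.onDir ⟨a, fun b => (c.ι.app j₁).onPos (g₁ b)⟩ eh).2
              (m.onDir ⟨a, f⟩ e).2 := by
        intro j₁ g₁ hg₁ eh heh
        exact sigma_heq_parts (fun b => congrArg c.pt.B (hg₁ b))
          (onDir_congr m (congrArg (Sigma.mk a) (funext hg₁)) heh)
      have hch := K.choose_spec.1 (gf a f) (hgf a f) e' HEq.rfl
        (cast (congrArg c.pt.B
          (hgf a f ((s.ι.app (jf a f)).onDir ⟨a, gf a f⟩ e').1).symm) K.choose)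
        (cast_heq _ _)
      have hmain₀ := main (gf a f) e'
        (cast (congrArg (fun z => s.pt.B (m.onPos z))
          (congrArg (Sigma.mk a) (funext (hgf a f))).symm) e)
        ((cast_heq _ _).trans he)
      obtain ⟨hB₀, hD₀⟩ := mrel (gf a f) (hgf a f)
        (cast (congrArg (fun z => s.pt.B (m.onPos z))
          (congrArg (Sigma.mk a) (funext (hgf a f))).symm) e)
        (cast_heq _ _)
      have hbm : (m.onDir ⟨a, f⟩ e).1 = ((s.ι.app (jf a f)).onDir ⟨a, gf a f⟩ e').1 :=
        hB₀.symm.trans (sigma_eq_parts (hmain₀.symm.trans hch)).1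
      have hchar : Char p q c s f (gf a f) e'
          (cast (congrArg (fun b => c.pt.B (f b)) hbm) (m.onDir ⟨a, f⟩ e).2) := by
        intro j₁ g₁ hg₁ e₁ he₁ dd hdd
        have hm₁ := main g₁ e₁
          (cast (congrArg (fun z => s.pt.B (m.onPos z))
            (congrArg (Sigma.mk a) (funext hg₁)).symm) e)
          ((cast_heq _ _).trans (he.trans he₁.symm))
        obtain ⟨hB₁, hD₁⟩ := mrel g₁ hg₁
          (cast (congrArg (fun z => s.pt.B (m.onPos z))
            (congrArg (Sigma.mk a) (funext hg₁)).symm) e)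
          (cast_heq _ _)
        refine hm₁.trans (sigma_mk_eq (hB₁.trans hbm) ?_)
        refine onDir_congr (c.ι.app j₁) (congrArg g₁ (hB₁.trans hbm)) ?_
        exact hD₁.trans ((cast_heq _ _).symm.trans hdd.symm)
      have hfinal := K.choose_spec.2 _ hchar
      refine Eq.trans (sigma_mk_eq hbm ((cast_heq _ _).symm) :
        m.onDir ⟨a, f⟩ e = ⟨((s.ι.app (jf a f)).onDir ⟨a, gf a f⟩ e').1,
          cast (congrArg (fun b => c.pt.B (f b)) hbm) (m.onDir ⟨a, f⟩ e).2⟩) ?_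
      rw [hfinal]
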